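/- Let γ : ℝ → ℝ be C² and bounded with ‖γ'‖_∞ ≤ 1/2, ψ(x) = x - γ(x). Then sup_x |ψ^{-1}(x) - x - γ(x)(1 + γ'(x))| ≤ (‖γ'‖_∞² + (1/2)‖γ''‖_∞ ‖γ‖_∞) ‖γ‖_∞. -/

import Mathlib

open Set

private lemma iter2_eq (f : ℝ → ℝ) {a b z : ℝ} (hz : z ∈ Ioo a b) :
    iteratedDerivWithin 2 f (Icc a b) z = deriv (deriv f) z := by
  have h1 : iteratedDerivWithin 2 f (Icc a b) z = iteratedDeriv 2 f z := by
    rw [iteratedDerivWithin_eq_iteratedFDerivWithin, iteratedDeriv_eq_iteratedFDeriv,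
      ← iteratedFDerivWithin_univ,
      ← iteratedFDerivWithin_inter_open isOpen_Ioo hz (s := Icc a b),
      ← iteratedFDerivWithin_inter_open isOpen_Ioo hz (s := univ),
      Set.inter_eq_self_of_subset_right Ioo_subset_Icc_self, Set.univ_inter]
  rw [h1, iteratedDeriv_succ, iteratedDeriv_one]

private lemma iter1_eq (f : ℝ → ℝ) {a b z : ℝ} (hz : z ∈ Ioo a b) :
    iteratedDerivWithin 1 f (Icc a b) z = deriv f z := by
  rw [iteratedDerivWithin_eq_iteratedFDerivWithin, ← iteratedDeriv_one,
    iteratedDeriv_eq_iteratedFDeriv, ← iteratedFDerivWithin_univ,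
    ← iteratedFDerivWithin_inter_open isOpen_Ioo hz (s := Icc a b),
    ← iteratedFDerivWithin_inter_open isOpen_Ioo hz (s := univ),
    Set.inter_eq_self_of_subset_right Ioo_subset_Icc_self, Set.univ_inter]

private lemma taylor2_lt (f : ℝ → ℝ) (hf : ContDiff ℝ 2 f) (M2 : ℝ)
    (hM : ∀ z, |deriv (deriv f) z| ≤ M2) {a b : ℝ} (hab : a < b) :
    |f b - f a - deriv f a * (b - a)| ≤ M2 / 2 * (b - a) ^ 2 := by
  have hd1 : Differentiable ℝ f := hf.differentiable (by norm_num)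
  have hf2 : ContDiff ℝ (1 + 1) f := by norm_num; exact hf
  have hd2 : ContDiff ℝ 1 (deriv f) := (contDiff_succ_iff_deriv.mp hf2).2.2
  have hd2' : Differentiable ℝ (deriv f) := hd2.differentiable (by norm_num)
  have hcd : ContDiffOn ℝ 1 f (Icc a b) := (hf.of_le (by norm_num)).contDiffOn
  have hdiff : DifferentiableOn ℝ (iteratedDerivWithin 1 f (Icc a b)) (Ioo a b) := by
    apply DifferentiableOn.congr (f := deriv f)
    · exact (hd2'.differentiableOn)
    · intro z hz; exact iter1_eq f hz
  obtain ⟨x', hx', h⟩ := taylor_mean_remainder_lagrange (n := 1) hab.ne (by rwa [uIcc_of_le hab.le])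
    (by rwa [uIcc_of_le hab.le, uIoo_of_le hab.le])
  rw [uIcc_of_le hab.le] at h
  rw [uIoo_of_le hab.le] at hx'
  have hdw : derivWithin f (Icc a b) a = deriv f a :=
    DifferentiableAt.derivWithin (hd1 a) (uniqueDiffOn_Icc hab a (left_mem_Icc.mpr hab.le))
  have ht : taylorWithinEval f 1 (Icc a b) a b = f a + deriv f a * (b - a) := by
    rw [taylorWithinEval_succ, taylor_within_zero_eval]
    simp only [Nat.factorial_one, Nat.cast_one, inv_one, one_smul, smul_eq_mul]
    rw [iteratedDerivWithin_one, hdw]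
    simp [Nat.factorial]
    ring
  rw [ht] at h
  have h2 : f b - f a - deriv f a * (b - a) =
      deriv (deriv f) x' * (b - a) ^ 2 / 2 := by
    rw [← iter2_eq f hx']
    rw [show f b - f a - deriv f a * (b - a) = f b - (f a + deriv f a * (b - a)) by ring, h]
    norm_num
  rw [h2]
  rw [abs_div, abs_mul]
  have : |(b - a) ^ 2| = (b - a) ^ 2 := abs_of_nonneg (sq_nonneg _)
  rw [this]
  rw [abs_of_nonneg (by norm_num : (0:ℝ) ≤ 2)]
  rw [div_le_iff₀ (by norm_num : (0:ℝ) < 2)]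
  have := hM x'
  nlinarith [sq_nonneg (b - a)]

private lemma taylor2 (f : ℝ → ℝ) (hf : ContDiff ℝ 2 f) (M2 : ℝ)
    (hM : ∀ z, |deriv (deriv f) z| ≤ M2) (a b : ℝ) :
    |f b - f a - deriv f a * (b - a)| ≤ M2 / 2 * (b - a) ^ 2 := by
  rcases lt_trichotomy a b with hab | hab | hab
  · exact taylor2_lt f hf M2 hM hab
  · subst hab
    norm_num
  · -- apply to g = f ∘ Neg.neg on (-a, -b)... rather (-a) > (-b); expansion at -a
    set g : ℝ → ℝ := fun t => f (-t) with hg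
    have hgc : ContDiff ℝ 2 g := hf.comp (contDiff_neg)
    have hgd : ∀ t, deriv g t = -deriv f (-t) := fun t => deriv_comp_neg f t
    have hgd2 : ∀ t, deriv (deriv g) t = deriv (deriv f) (-t) := by
      intro t
      have : deriv g = fun t => -deriv f (-t) := funext hgd
      rw [this]
      rw [deriv_comp_neg (fun s => -deriv f s) t]
      rw [deriv.fun_neg]
      ring
    have hM' : ∀ z, |deriv (deriv g) z| ≤ M2 := by
      intro z; rw [hgd2]; exact hM _
    have := taylor2_lt g hgc M2 hM' (a := -a) (b := -b) (by linarith)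
    simp only [hg] at this
    rw [hgd (-a)] at this
    simp only [neg_neg] at this
    convert this using 2
    · ring
    · ring

theorem stmt15 (γ : ℝ → ℝ) (hγ : ContDiff ℝ 2 γ) (hd : ∀ x, |deriv γ x| ≤ 1/2)
    (M0 M1 M2 : ℝ) (hb0 : ∀ x, |γ x| ≤ M0) (hb1 : ∀ x, |deriv γ x| ≤ M1)
    (hb2 : ∀ x, |deriv (deriv γ) x| ≤ M2) :
    ∀ x : ℝ,
      |Function.invFun (fun x : ℝ => x - γ x) x - x - γ x * (1 + deriv γ x)|
        ≤ (M1^2 + (1/2) * M2 * M0) * M0 := by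
  intro x
  have hM0 : 0 ≤ M0 := (abs_nonneg _).trans (hb0 0)
  have hM1 : 0 ≤ M1 := (abs_nonneg _).trans (hb1 0)
  have hM2 : 0 ≤ M2 := (abs_nonneg _).trans (hb2 0)
  set ψ : ℝ → ℝ := fun x : ℝ => x - γ x with hψ
  have hcont : Continuous ψ := continuous_id.sub hγ.continuous
  have hdiff : Differentiable ℝ γ := hγ.differentiable (by norm_num)
  -- surjectivity at x
  have hsurj : ∃ y, ψ y = x := by
    have h1 : ψ (x - M0) ≤ x := by
      have := abs_le.mp (hb0 (x - M0))
      simp only [hψ]; linarith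
    have h2 : x ≤ ψ (x + M0) := by
      have := abs_le.mp (hb0 (x + M0))
      simp only [hψ]; linarith
    obtain ⟨y, _, hy⟩ := intermediate_value_Icc (by linarith : x - M0 ≤ x + M0)
      hcont.continuousOn (mem_Icc.mpr ⟨h1, h2⟩)
    exact ⟨y, hy⟩
  have hy : ψ (Function.invFun ψ x) = x := Function.invFun_eq hsurj
  set y := Function.invFun ψ x with hy_def
  have hyx : y - x = γ y := by
    simp only [hψ] at hy; linarith
  have hyM : |y - x| ≤ M0 := by rw [hyx]; exact hb0 y
  -- key algebraic identity
  have key : y - x - γ x * (1 + deriv γ x) =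
      (γ y - γ x - deriv γ x * (y - x)) + deriv γ x * (γ y - γ x) := by
    rw [hyx]; ring
  have hT : |γ y - γ x - deriv γ x * (y - x)| ≤ M2 / 2 * (y - x) ^ 2 :=
    taylor2 γ hγ M2 hb2 x y
  have hsq : (y - x) ^ 2 ≤ M0 ^ 2 := by
    rw [← sq_abs]
    exact pow_le_pow_left₀ (abs_nonneg _) hyM 2
  have hL : |γ y - γ x| ≤ M1 * |y - x| := by
    have := Convex.norm_image_sub_le_of_norm_deriv_le (s := Set.univ)
      (fun z _ => (hdiff z)) (fun z _ => hb1 z) convex_univ (mem_univ x) (mem_univ y)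
    simpa [Real.norm_eq_abs] using this
  have hLM : |γ y - γ x| ≤ M1 * M0 := hL.trans (by
    have := mul_le_mul_of_nonneg_left hyM hM1; linarith)
  calc |y - x - γ x * (1 + deriv γ x)|
      = |(γ y - γ x - deriv γ x * (y - x)) + deriv γ x * (γ y - γ x)| := by rw [key]
    _ ≤ |γ y - γ x - deriv γ x * (y - x)| + |deriv γ x * (γ y - γ x)| := abs_add_le _ _
    _ ≤ M2 / 2 * M0 ^ 2 + M1 * (M1 * M0) := by
        refine add_le_add (hT.trans (by nlinarith)) ?_
        rw [abs_mul]
        exact mul_le_mul (hb1 x) hLM (abs_nonneg _) hM1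
    _ = (M1^2 + (1/2) * M2 * M0) * M0 := by ring
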